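/- Let ε > 0, let b : [t_0,∞) → ℝ be differentiable with b′(t) < 0 for all t ≥ t_0 and with finite limit b_* = lim_{t→∞} b(t), and let u : [t_0,∞) → ℝ be differentiable and satisfy ε·u′(t) = −u(t) + b(t) for all t ≥ t_0. Then u is eventually strictly monotone with |u′(t)| > 0 for all sufficiently large t, with the following specification: (i) if u(t_0) ≥ b(t_0) then u(t) > b(t) and u′(t) < 0 for all t > t_0; (ii) if b_* ≤ u(t_0) < b(t_0) then there exists T > t_0 such that u is strictly increasing on [t_0,T] and strictly decreasing on [T,∞), and moreover u(t) > b(t) and u′(t) < 0 for all t > T; (iii) if u(t_0) < b_* then either u′(t) > 0 for all t ≥ t_0, or there exists a finite t_1 > t_0 with u(t_1) = b_* and then u(t) > b(t), u′(t) < 0 for all sufficiently large t. -/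

import Mathlib

/-- Proposition 4: if `ε u'(t) = -u(t) + b(t)` with `ε > 0` and `b` differentiable,
strictly decreasing (`b' < 0`) with finite limit `b_*` at infinity, then `u` is
eventually strictly monotone with nonvanishing derivative, and:
(i) `u(t₀) ≥ b(t₀)` implies `u(t) > b(t)` and `u'(t) < 0` for all `t > t₀`;
(ii) `b_* ≤ u(t₀) < b(t₀)` implies `u` strictly increases on `[t₀,T]`, strictly
decreases on `[T,∞)` and `u(t) > b(t)`, `u'(t) < 0` for `t > T`, for some `T > t₀`;
(iii) `u(t₀) < b_*` implies either `u' > 0` on `[t₀,∞)`, or there is a finite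
`t₁ > t₀` with `u(t₁) = b_*` and then `u(t) > b(t)`, `u'(t) < 0` eventually. -/
theorem eventually_strict_monotone_decreasing_forcing
    (ε t₀ bstar : ℝ) (hε : 0 < ε)
    (b u : ℝ → ℝ)
    (hbdiff : ∀ t : ℝ, t₀ ≤ t → DifferentiableAt ℝ b t)
    (hb' : ∀ t : ℝ, t₀ ≤ t → deriv b t < 0)
    (hblim : Filter.Tendsto b Filter.atTop (nhds bstar))
    (hu : ∀ t : ℝ, t₀ ≤ t → HasDerivAt u ((-u t + b t) / ε) t) :
    (∃ T : ℝ, t₀ ≤ T ∧ (∀ t : ℝ, T ≤ t → deriv u t ≠ 0) ∧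
      (StrictMonoOn u (Set.Ici T) ∨ StrictAntiOn u (Set.Ici T))) ∧
    (b t₀ ≤ u t₀ → ∀ t : ℝ, t₀ < t → b t < u t ∧ deriv u t < 0) ∧
    (bstar ≤ u t₀ → u t₀ < b t₀ →
      ∃ T : ℝ, t₀ < T ∧ StrictMonoOn u (Set.Icc t₀ T) ∧ StrictAntiOn u (Set.Ici T) ∧
        ∀ t : ℝ, T < t → b t < u t ∧ deriv u t < 0) ∧
    (u t₀ < bstar →
      (∀ t : ℝ, t₀ ≤ t → 0 < deriv u t) ∨
      (∃ t₁ : ℝ, t₀ < t₁ ∧ u t₁ = bstar ∧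
        ∃ T : ℝ, t₀ ≤ T ∧ ∀ t : ℝ, T < t → b t < u t ∧ deriv u t < 0)) := by
  -- the auxiliary function v(t) = exp(t/ε) (u t - b t) is strictly increasing
  set v : ℝ → ℝ := fun t => Real.exp (t / ε) * (u t - b t) with hvdef
  have hbd : ∀ t, t₀ ≤ t → HasDerivAt b (deriv b t) t :=
    fun t ht => (hbdiff t ht).hasDerivAt
  have hvd : ∀ t, t₀ ≤ t → HasDerivAt v (Real.exp (t / ε) * (-(deriv b t))) t := by
    intro t ht
    have h1 : HasDerivAt (fun s : ℝ => Real.exp (s / ε)) (Real.exp (t / ε) * (1 / ε)) t := by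
      have := (Real.hasDerivAt_exp (t / ε)).comp t ((hasDerivAt_id t).div_const ε)
      simpa [Function.comp_def] using this
    have h2 : HasDerivAt (fun s => u s - b s) ((-u t + b t) / ε - deriv b t) t :=
      (hu t ht).sub (hbd t ht)
    have h3 := h1.mul h2
    convert h3 using 1
    · rfl
    · rfl
    · rfl
    ring
  have hucont : ContinuousOn u (Set.Ici t₀) :=
    fun t ht => (hu t ht).continuousAt.continuousWithinAt
  have hbcont : ContinuousOn b (Set.Ici t₀) :=
    fun t ht => (hbdiff t ht).continuousAt.continuousWithinAt
  have hvcont : ContinuousOn v (Set.Ici t₀) :=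
    fun t ht => (hvd t ht).continuousAt.continuousWithinAt
  have hvmono : StrictMonoOn v (Set.Ici t₀) := by
    apply strictMonoOn_of_deriv_pos (convex_Ici t₀) hvcont
    intro t ht
    rw [interior_Ici] at ht
    rw [(hvd t ht.le).deriv]
    have := hb' t ht.le
    have := Real.exp_pos (t / ε)
    nlinarith
  have hderiv_u : ∀ t, t₀ ≤ t → deriv u t = (-u t + b t) / ε := fun t ht => (hu t ht).deriv
  have hvpos : ∀ t : ℝ, 0 < v t → b t < u t := by
    intro t h
    have he := Real.exp_pos (t / ε)
    rw [hvdef] at h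
    nlinarith
  have hune : ∀ t, t₀ ≤ t → b t < u t → deriv u t < 0 := by
    intro t ht h
    rw [hderiv_u t ht]
    apply div_neg_of_neg_of_pos _ hε
    linarith
  have hupos : ∀ t, t₀ ≤ t → u t < b t → 0 < deriv u t := by
    intro t ht h
    rw [hderiv_u t ht]
    apply div_pos _ hε
    linarith
  have key : ∀ s t : ℝ, t₀ ≤ s → s < t → b s ≤ u s → b t < u t := by
    intro s t hs hst hbs
    apply hvpos
    have h1 : v s < v t :=
      hvmono (Set.mem_Ici.mpr hs) (Set.mem_Ici.mpr (hs.trans hst.le)) hst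
    have h2 : 0 ≤ v s := mul_nonneg (Real.exp_pos _).le (by linarith)
    linarith
  -- b is strictly above bstar
  have hbanti : StrictAntiOn b (Set.Ici t₀) := by
    apply strictAntiOn_of_deriv_neg (convex_Ici t₀) hbcont
    intro t ht
    rw [interior_Ici] at ht
    exact hb' t ht.le
  have hb_gt : ∀ t, t₀ ≤ t → bstar < b t := by
    intro t ht
    have h1 : bstar ≤ b (t + 1) := by
      apply le_of_tendsto hblim
      filter_upwards [Filter.eventually_ge_atTop (t + 1)] with s hs
      rcases eq_or_lt_of_le hs with rfl | hlt
      · rfl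
      · exact (hbanti (Set.mem_Ici.mpr (by linarith)) (Set.mem_Ici.mpr (by linarith)) hlt).le
    have h2 : b (t + 1) < b t :=
      hbanti (Set.mem_Ici.mpr ht) (Set.mem_Ici.mpr (by linarith)) (by linarith)
    linarith
  refine ⟨?_, ?_, ?_, ?_⟩
  · -- eventual strict monotonicity
    by_cases hP : ∃ s, t₀ ≤ s ∧ b s ≤ u s
    · obtain ⟨s, hs, hbs⟩ := hP
      refine ⟨s + 1, by linarith, ?_, Or.inr ?_⟩
      · intro t ht
        have h1 : b t < u t := key s t hs (by linarith) hbs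
        exact (hune t (by linarith) h1).ne
      · apply strictAntiOn_of_deriv_neg (convex_Ici (s + 1))
          (hucont.mono (Set.Ici_subset_Ici.mpr (by linarith)))
        intro t ht
        rw [interior_Ici] at ht
        exact hune t (by linarith [Set.mem_Ioi.mp ht]) (key s t hs (by linarith [Set.mem_Ioi.mp ht]) hbs)
    · push_neg at hP
      refine ⟨t₀, le_rfl, ?_, Or.inl ?_⟩
      · intro t ht
        exact (hupos t ht (hP t ht)).ne'
      · apply strictMonoOn_of_deriv_pos (convex_Ici t₀) hucont
        intro t ht
        rw [interior_Ici] at ht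
        exact hupos t ht.le (hP t ht.le)
  · -- (i)
    intro hge t ht
    have h1 : b t < u t := key t₀ t le_rfl ht hge
    exact ⟨h1, hune t ht.le h1⟩
  · -- (ii)
    intro h1 h2
    have hP : ∃ s, t₀ ≤ s ∧ b s ≤ u s := by
      by_contra hcon
      push_neg at hcon
      have hmono : StrictMonoOn u (Set.Ici t₀) := by
        apply strictMonoOn_of_deriv_pos (convex_Ici t₀) hucont
        intro t ht
        rw [interior_Ici] at ht
        exact hupos t ht.le (hcon t ht.le)
      have hc : u t₀ < u (t₀ + 1) :=
        hmono (Set.mem_Ici.mpr le_rfl) (Set.mem_Ici.mpr (by linarith)) (by linarith)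
      have hev : ∀ᶠ s in Filter.atTop, b s < u (t₀ + 1) :=
        hblim.eventually_lt_const (by linarith)
      obtain ⟨s, hs1, hs2⟩ := (hev.and (Filter.eventually_ge_atTop (t₀ + 1))).exists
      have h3 : u (t₀ + 1) ≤ u s :=
        hmono.monotoneOn (Set.mem_Ici.mpr (by linarith)) (Set.mem_Ici.mpr (by linarith)) hs2
      have := hcon s (by linarith)
      linarith
    obtain ⟨s, hs, hbs⟩ := hP
    have hst : t₀ < s := by
      rcases eq_or_lt_of_le hs with rfl | h
      · linarith
      · exact h
    have hvt₀ : v t₀ < 0 := mul_neg_of_pos_of_neg (Real.exp_pos _) (by linarith)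
    have hvs : 0 ≤ v s := mul_nonneg (Real.exp_pos _).le (by linarith)
    obtain ⟨T, hTmem, hvT⟩ := intermediate_value_Icc hst.le
      (hvcont.mono (Set.Icc_subset_Ici_self)) (Set.mem_Icc.mpr ⟨hvt₀.le, hvs⟩)
    obtain ⟨hT1, hT2⟩ := Set.mem_Icc.mp hTmem
    have hT0 : t₀ < T := by
      rcases eq_or_lt_of_le hT1 with rfl | h
      · rw [hvT] at hvt₀; linarith
      · exact h
    have hbefore : ∀ t, t₀ ≤ t → t < T → u t < b t := by
      intro t ht htT
      have h3 : v t < v T :=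
        hvmono (Set.mem_Ici.mpr ht) (Set.mem_Ici.mpr hT1) htT
      rw [hvT] at h3
      simp only [hvdef] at h3
      have he := Real.exp_pos (t / ε)
      nlinarith
    have hafter : ∀ t, T < t → b t < u t := by
      intro t hTt
      apply hvpos
      have h3 : v T < v t :=
        hvmono (Set.mem_Ici.mpr hT1) (Set.mem_Ici.mpr (by linarith)) hTt
      rw [hvT] at h3
      exact h3
    refine ⟨T, hT0, ?_, ?_, ?_⟩
    · apply strictMonoOn_of_deriv_pos (convex_Icc t₀ T)
        (hucont.mono Set.Icc_subset_Ici_self)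
      intro t ht
      rw [interior_Icc] at ht
      exact hupos t ht.1.le (hbefore t ht.1.le ht.2)
    · apply strictAntiOn_of_deriv_neg (convex_Ici T)
        (hucont.mono (Set.Ici_subset_Ici.mpr hT1))
      intro t ht
      rw [interior_Ici] at ht
      have ht' := Set.mem_Ioi.mp ht
      exact hune t (by linarith) (hafter t ht')
    · intro t hTt
      exact ⟨hafter t hTt, hune t (by linarith) (hafter t hTt)⟩
  · -- (iii)
    intro hlt
    by_cases hP : ∃ s, t₀ ≤ s ∧ b s ≤ u s
    · right
      obtain ⟨s, hs, hbs⟩ := hP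
      have hbsgt : bstar < b s := hb_gt s hs
      have hst : t₀ < s := by
        rcases eq_or_lt_of_le hs with rfl | h
        · linarith
        · exact h
      obtain ⟨t₁, ht₁mem, ht₁⟩ := intermediate_value_Icc hst.le
        (hucont.mono (Set.Icc_subset_Ici_self)) (Set.mem_Icc.mpr ⟨hlt.le, by linarith⟩)
      obtain ⟨ht₁1, ht₁2⟩ := Set.mem_Icc.mp ht₁mem
      have ht₁0 : t₀ < t₁ := by
        rcases eq_or_lt_of_le ht₁1 with rfl | h
        · rw [ht₁] at hlt; linarith
        · exact h
      refine ⟨t₁, ht₁0, ht₁, s, hs, ?_⟩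
      intro t hst'
      have h3 : b t < u t := key s t hs hst' hbs
      exact ⟨h3, hune t (by linarith) h3⟩
    · left
      push_neg at hP
      intro t ht
      exact hupos t ht (hP t ht)
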